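/- Let Q ≪ P be a probability measure on (Ω, F) with Q ∼ P on the sub-σ-algebra G, and define Q̃ by Q̃(F) := E_Q[ E_Q[dP/dQ | G] · 1_F ] for F ∈ F. Then Q̃ is a probability measure with Q̃ = P on G, and E_{Q̃}[X | G] = E_Q[X | G] a.s. for every bounded F-measurable X. -/

import Mathlib

open MeasureTheory Filter Set

noncomputable section

/-- `X` is a bounded `F`-measurable random variable (an element of `L∞(F)`). -/
def IsBddMeas {Ω : Type*} (F : MeasurableSpace Ω) (X : Ω → ℝ) : Prop :=
  Measurable[F] X ∧ ∃ C : ℝ, ∀ ω, |X ω| ≤ C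

/-- Regularity (REG) of the conditional map `π` with respect to the
sub-σ-algebra `m`: `π (X 1_A + Y 1_{Aᶜ}) = π X 1_A + π Y 1_{Aᶜ}` a.s. -/
def Regular {Ω : Type*} (F m : MeasurableSpace Ω) (μ : @Measure Ω F)
    (π : (Ω → ℝ) → Ω → ℝ) : Prop :=
  ∀ X Y : Ω → ℝ, IsBddMeas F X → IsBddMeas F Y → ∀ A : Set Ω, MeasurableSet[m] A →
    π (A.indicator X + Aᶜ.indicator Y) =ᵐ[μ] A.indicator (π X) + Aᶜ.indicator (π Y)

/-- `I` is an essential infimum (in the `μ`-a.e. pointwise order) of the set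
`S` of random variables. -/
def IsEssInf {Ω : Type*} {F : MeasurableSpace Ω} (μ : @Measure Ω F)
    (S : Set (Ω → ℝ)) (I : Ω → ℝ) : Prop :=
  (∀ f ∈ S, I ≤ᵐ[μ] f) ∧ ∀ g : Ω → ℝ, (∀ f ∈ S, g ≤ᵐ[μ] f) → g ≤ᵐ[μ] I

/-- `I` is an essential supremum (in the `μ`-a.e. pointwise order) of the set
`S` of random variables. -/
def IsEssSup {Ω : Type*} {F : MeasurableSpace Ω} (μ : @Measure Ω F)
    (S : Set (Ω → ℝ)) (I : Ω → ℝ) : Prop :=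
  (∀ f ∈ S, f ≤ᵐ[μ] I) ∧ ∀ g : Ω → ℝ, (∀ f ∈ S, f ≤ᵐ[μ] g) → I ≤ᵐ[μ] g

/-- The measure with density `f` with respect to `ν`. -/
def densMeasure {Ω : Type*} {F : MeasurableSpace Ω} (ν : @Measure Ω F)
    (f : Ω → ℝ) : @Measure Ω F :=
  ν.withDensity fun ω => ENNReal.ofReal (f ω)

open scoped NNReal ENNReal

lemma auxWdApply {Ω : Type*} {F0 : MeasurableSpace Ω} (ν : Measure Ω) (f : Ω → ℝ≥0∞)
    {s : Set Ω} (hs : MeasurableSet s) :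
    ν.withDensity f s = ∫⁻ a in s, f a ∂ν :=
  withDensity_apply f hs

lemma auxSetInt {Ω : Type*} {F0 : MeasurableSpace Ω} {ν : Measure Ω} {f : Ω → ℝ≥0}
    (hf : Measurable f) (g : Ω → ℝ) {s : Set Ω} (hs : MeasurableSet s) :
    ∫ x in s, g x ∂ν.withDensity (fun x => (f x : ℝ≥0∞)) = ∫ x in s, (f x : ℝ) • g x ∂ν :=
  setIntegral_withDensity_eq_setIntegral_smul hf g hs

lemma auxIntegrableOn {Ω : Type*} {F0 : MeasurableSpace Ω} {μ : Measure Ω} {f : Ω → ℝ}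
    (h : Integrable f μ) (s : Set Ω) : IntegrableOn f s μ :=
  h.integrableOn

lemma auxOfReal {Ω : Type*} {F0 : MeasurableSpace Ω} {μ : Measure Ω} {f : Ω → ℝ}
    (hfi : Integrable f μ) (hnn : 0 ≤ᵐ[μ] f) :
    ENNReal.ofReal (∫ x, f x ∂μ) = ∫⁻ x, ENNReal.ofReal (f x) ∂μ :=
  ofReal_integral_eq_lintegral_ofReal hfi hnn

lemma auxCondexpUnique {Ω : Type*} {m F0 : MeasurableSpace Ω} {μ : @Measure Ω F0}
    (hm : m ≤ F0) [SigmaFinite (μ.trim hm)] {f g : Ω → ℝ} (hf : Integrable f μ)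
    (hg_int_finite : ∀ s, MeasurableSet[m] s → μ s < ∞ → IntegrableOn g s μ)
    (hg_eq : ∀ s : Set Ω, MeasurableSet[m] s → μ s < ∞ → ∫ x in s, g x ∂μ = ∫ x in s, f x ∂μ)
    (hgm : AEStronglyMeasurable[m] g μ) : g =ᵐ[μ] μ[f|m] :=
  ae_eq_condExp_of_forall_setIntegral_eq hm hf hg_int_finite hg_eq hgm

/-- Rescaling `Q` by the `G`-measurable density `Z = E_Q[dP/dQ | G]` of the
`P`-restriction to `G` w.r.t. the `Q`-restriction to `G` produces a
probability measure `Q̃` with `Q̃ = P` on `G` which leaves conditional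
expectations given `G` unchanged: `E_{Q̃}[X|G] = E_Q[X|G]` a.s. -/
theorem rescaled_measure_preserves_condexp
    {Ω : Type*} [F : MeasurableSpace Ω] (μ : Measure Ω) [IsProbabilityMeasure μ]
    (m : MeasurableSpace Ω) (hm : m ≤ F)
    (ν : @Measure Ω F) [IsProbabilityMeasure ν] (hν : ν ≪ μ)
    (hequiv : ∀ A : Set Ω, MeasurableSet[m] A → (ν A = 0 ↔ μ A = 0))
    (Z : Ω → ℝ) (hZm : Measurable[m] Z) (hZpos : ∀ᵐ ω ∂ν, 0 < Z ω)
    (hZdens : ∀ A : Set Ω, MeasurableSet[m] A →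
      (∫ ω in A, Z ω ∂ν) = (μ A).toReal) :
    IsProbabilityMeasure (densMeasure ν Z) ∧
    (∀ A : Set Ω, MeasurableSet[m] A → densMeasure ν Z A = μ A) ∧
    (∀ X : Ω → ℝ, IsBddMeas F X →
      (densMeasure ν Z)[X|m] =ᵐ[ν] ν[X|m]) := by
  have hZF : Measurable[F] Z := hZm.mono hm le_rfl
  have hZnn : 0 ≤ᵐ[ν] Z := hZpos.mono fun ω h => h.le
  -- integrability of Z
  have hZint : Integrable Z ν := by
    by_contra h
    have h1 := hZdens univ MeasurableSet.univ
    rw [Measure.restrict_univ, integral_undef h] at h1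
    simp [measure_univ] at h1
  -- rewrite densMeasure as withDensity of an ℝ≥0 function
  have hrw : densMeasure ν Z
      = ν.withDensity (fun ω => (((Z ω).toNNReal : NNReal) : ENNReal)) := rfl
  have hZnF : Measurable[F] fun ω => (Z ω).toNNReal := hZF.real_toNNReal
  -- the measure of m-measurable sets
  have key : ∀ A : Set Ω, MeasurableSet[m] A → densMeasure ν Z A = μ A := by
    intro A hA
    have hA' : MeasurableSet[F] A := hm A hA
    have : densMeasure ν Z A = ∫⁻ ω in A, ENNReal.ofReal (Z ω) ∂ν :=
      auxWdApply ν _ hA'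
    rw [this, ← auxOfReal (auxIntegrableOn hZint A) (ae_restrict_of_ae hZnn), hZdens A hA,
      ENNReal.ofReal_toReal (measure_ne_top μ A)]
  have hprob : IsProbabilityMeasure (densMeasure ν Z) := by
    constructor
    rw [key univ MeasurableSet.univ, measure_univ]
  refine ⟨hprob, key, ?_⟩
  -- conditional expectation part
  intro X hX
  obtain ⟨hXm, C, hC⟩ := hX
  haveI := hprob
  have hTN : densMeasure ν Z ≪ ν := @withDensity_absolutelyContinuous Ω F ν _
  have hNT : ν ≪ densMeasure ν Z := by
    refine withDensity_absolutelyContinuous' (by fun_prop) ?_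
    exact hZpos.mono fun ω h => (ENNReal.ofReal_pos.mpr h).ne'
  set Y := ν[X|m] with hY
  set R : ℝ≥0 := C.toNNReal with hR
  have hCR : ∀ ω, |X ω| ≤ (R : ℝ) := fun ω =>
    (hC ω).trans (Real.le_coe_toNNReal C)
  have hYbdd : ∀ᵐ ω ∂ν, |Y ω| ≤ (R : ℝ) :=
    ae_bdd_condExp_of_ae_bdd (ae_of_all _ hCR)
  have hXint : ∀ (ρ : @Measure Ω F), IsFiniteMeasure ρ → Integrable X ρ := by
    intro ρ hρ
    exact Integrable.mono' (integrable_const (R : ℝ)) hXm.aestronglyMeasurable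
      (ae_of_all _ fun ω => by simpa using hCR ω)
  have hXintν : Integrable X ν := hXint ν inferInstance
  have hXintT : Integrable X (densMeasure ν Z) := hXint _ inferInstance
  have hZXint : Integrable (Z * X) ν := by
    refine Integrable.mono' (hZint.const_mul (R : ℝ))
      (hZF.mul hXm).aestronglyMeasurable ?_
    filter_upwards [hZpos] with ω hω
    calc ‖Z ω * X ω‖ = |Z ω| * |X ω| := abs_mul _ _
      _ ≤ Z ω * (R : ℝ) := by
          rw [abs_of_pos hω]
          exact mul_le_mul_of_nonneg_left (hCR ω) hω.le
      _ = (R : ℝ) * Z ω := mul_comm _ _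
  have hmul : ν[Z * X|m] =ᵐ[ν] Z * Y :=
    condExp_mul_of_stronglyMeasurable_left hZm.stronglyMeasurable hZXint hXintν
  have hYsm : StronglyMeasurable[m] Y := stronglyMeasurable_condExp
  have hYintT : Integrable Y (densMeasure ν Z) := by
    refine Integrable.mono' (integrable_const (R : ℝ))
      ((hYsm.mono hm).aestronglyMeasurable) ?_
    filter_upwards [hTN.ae_le hYbdd] with ω hω
    simpa using hω
  -- the set-integral identity
  have hseteq : ∀ s : Set Ω, MeasurableSet[m] s →
      ∫ ω in s, Y ω ∂(densMeasure ν Z) = ∫ ω in s, X ω ∂(densMeasure ν Z) := by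
    intro s hs
    have hs' : MeasurableSet[F] s := hm s hs
    have hwd : ∀ g : Ω → ℝ, ∫ ω in s, g ω ∂(densMeasure ν Z)
        = ∫ ω in s, ((Z ω).toNNReal : ℝ) • g ω ∂ν := by
      intro g
      rw [hrw]
      exact auxSetInt hZnF g hs'
    have hcoe : ∀ g : Ω → ℝ,
        ∫ ω in s, ((Z ω).toNNReal : ℝ) • g ω ∂ν = ∫ ω in s, Z ω * g ω ∂ν := by
      intro g
      refine integral_congr_ae ?_
      filter_upwards [ae_restrict_of_ae hZpos] with ω hω
      simp [Real.coe_toNNReal _ hω.le, smul_eq_mul]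
    have hZYint : Integrable (fun ω => Z ω * Y ω) ν := by
      refine Integrable.mono' (hZint.const_mul (R : ℝ))
        (hZF.mul (hYsm.mono hm).measurable).aestronglyMeasurable ?_
      filter_upwards [hZpos, hYbdd] with ω hω hY
      calc ‖Z ω * Y ω‖ = |Z ω| * |Y ω| := abs_mul _ _
        _ ≤ Z ω * (R : ℝ) := by
            rw [abs_of_pos hω]
            exact mul_le_mul_of_nonneg_left hY hω.le
        _ = (R : ℝ) * Z ω := mul_comm _ _
    calc ∫ ω in s, Y ω ∂(densMeasure ν Z)
        = ∫ ω in s, Z ω * Y ω ∂ν := by rw [hwd Y, hcoe Y]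
      _ = ∫ ω in s, (ν[Z * X|m]) ω ∂ν := by
          refine integral_congr_ae ?_
          filter_upwards [ae_restrict_of_ae hmul] with ω hω
          exact hω.symm
      _ = ∫ ω in s, (Z * X) ω ∂ν := setIntegral_condExp hm hZXint hs
      _ = ∫ ω in s, Z ω * X ω ∂ν := rfl
      _ = ∫ ω in s, X ω ∂(densMeasure ν Z) := by rw [hwd X, hcoe X]
  haveI : SigmaFinite ((densMeasure ν Z).trim hm) := by
    have : IsFiniteMeasure ((densMeasure ν Z).trim hm) := by
      constructor
      rw [trim_measurableSet_eq hm MeasurableSet.univ]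
      exact measure_lt_top _ _
    infer_instance
  have hfinal : Y =ᵐ[densMeasure ν Z] (densMeasure ν Z)[X|m] := by
    refine auxCondexpUnique hm hXintT
      (fun s hs _ => auxIntegrableOn hYintT s) (fun s hs _ => hseteq s hs) ?_
    exact hYsm.aestronglyMeasurable
  exact (hfinal.filter_mono hNT.ae_le).symm
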